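/- Let H be a Hilbert space, φ a bounded finite potent endomorphism with core-nilpotent decomposition φ = φ₁ + φ₂, and let φ* = (φ*)₁ + (φ*)₂ be the core-nilpotent decomposition of the adjoint φ*. Then (φ*)₁ = (φ₁)* and (φ*)₂ = (φ₂)*. -/

import Mathlib

/-- If `φ = φ₁ + φ₂` is the core-nilpotent decomposition of a bounded finite potent
`φ` and `φ* = ψ₁ + ψ₂` that of its adjoint, then `ψ₁ = (φ₁)*` and `ψ₂ = (φ₂)*`
(expressed via the inner product, since `φ₁`, `φ₂` are a priori only linear). -/
theorem adjoint_core_nilpotent_parts {H : Type*} [NormedAddCommGroup H]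
    [InnerProductSpace ℂ H] [CompleteSpace H]
    (φ : H →L[ℂ] H)
    (W U : Submodule ℂ H) (hWU : IsCompl W U) [FiniteDimensional ℂ W]
    (hW : ∀ x ∈ W, φ.toLinearMap x ∈ W) (hU : ∀ x ∈ U, φ.toLinearMap x ∈ U)
    (hWa : Function.Bijective (φ.toLinearMap.restrict hW))
    (hUn : IsNilpotent (φ.toLinearMap.restrict hU))
    (W' U' : Submodule ℂ H) (hWU' : IsCompl W' U') [FiniteDimensional ℂ W']
    (hW' : ∀ x ∈ W', (ContinuousLinearMap.adjoint φ).toLinearMap x ∈ W')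
    (hU' : ∀ x ∈ U', (ContinuousLinearMap.adjoint φ).toLinearMap x ∈ U')
    (hWa' : Function.Bijective ((ContinuousLinearMap.adjoint φ).toLinearMap.restrict hW'))
    (hUn' : IsNilpotent ((ContinuousLinearMap.adjoint φ).toLinearMap.restrict hU'))
    -- core-nilpotent decomposition of `φ`
    (φ₁ φ₂ : H →ₗ[ℂ] H)
    (hφ₁W : ∀ v ∈ W, φ₁ v = φ v) (hφ₁U : ∀ v ∈ U, φ₁ v = 0)
    (hφ₂W : ∀ v ∈ W, φ₂ v = 0) (hφ₂U : ∀ v ∈ U, φ₂ v = φ v)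
    -- core-nilpotent decomposition of `φ*`
    (ψ₁ ψ₂ : H →ₗ[ℂ] H)
    (hψ₁W : ∀ v ∈ W', ψ₁ v = ContinuousLinearMap.adjoint φ v)
    (hψ₁U : ∀ v ∈ U', ψ₁ v = 0)
    (hψ₂W : ∀ v ∈ W', ψ₂ v = 0)
    (hψ₂U : ∀ v ∈ U', ψ₂ v = ContinuousLinearMap.adjoint φ v) :
    (∀ x y : H, (inner ℂ (ψ₁ x) y : ℂ) = inner ℂ x (φ₁ y)) ∧
    (∀ x y : H, (inner ℂ (ψ₂ x) y : ℂ) = inner ℂ x (φ₂ y)) := by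
  set f := φ.toLinearMap with hf
  set g := (ContinuousLinearMap.adjoint φ).toLinearMap with hg
  obtain ⟨m, hm⟩ := hUn
  obtain ⟨m', hm'⟩ := hUn'
  set n := m + m' with hn
  -- On `U`, `f ^ n = 0`
  have nilU : ∀ u ∈ U, (f ^ n) u = 0 := by
    intro u hu
    have h0 : (f.restrict hU) ^ n = 0 := pow_eq_zero_of_le (Nat.le_add_right m m') hm
    rw [Module.End.pow_restrict] at h0
    have := congrArg Subtype.val (LinearMap.ext_iff.1 h0 ⟨u, hu⟩)
    simpa [LinearMap.restrict_apply] using this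
  -- On `U'`, `g ^ n = 0`
  have nilU' : ∀ u ∈ U', (g ^ n) u = 0 := by
    intro u hu
    have h0 : (g.restrict hU') ^ n = 0 := pow_eq_zero_of_le (Nat.le_add_left m' m) hm'
    rw [Module.End.pow_restrict] at h0
    have := congrArg Subtype.val (LinearMap.ext_iff.1 h0 ⟨u, hu⟩)
    simpa [LinearMap.restrict_apply] using this
  -- `f ^ n` is surjective onto `W`, and `g ^ n` onto `W'`
  have surj : ∀ (p : H →ₗ[ℂ] H) (V : Submodule ℂ H) (hV : ∀ x ∈ V, p x ∈ V)
      (hb : Function.Bijective (p.restrict hV)) (k : ℕ), ∀ w ∈ V, ∃ w₀ ∈ V, (p ^ k) w₀ = w := by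
    intro p V hV hb k
    induction k with
    | zero => intro w hw; exact ⟨w, hw, rfl⟩
    | succ k ih =>
      intro w hw
      obtain ⟨⟨w₁, hw₁⟩, h1⟩ := hb.2 ⟨w, hw⟩
      obtain ⟨w₀, hw₀, h0⟩ := ih w₁ hw₁
      refine ⟨w₀, hw₀, ?_⟩
      have h1' : p w₁ = w := congrArg Subtype.val h1
      rw [pow_succ', Module.End.mul_apply, h0, h1']
  -- key adjoint identity
  have adjpow : ∀ (x y : H), (inner ℂ ((f ^ n) x) y : ℂ) = inner ℂ x ((g ^ n) y) := by
    intro x y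
    have hfp : f ^ n = (φ ^ n).toLinearMap := by
      rw [hf]; exact (map_pow (ContinuousLinearMap.toLinearMapRingHom (R₁ := ℂ) (M₁ := H)) φ n).symm
    have hgp : g ^ n = (ContinuousLinearMap.adjoint (φ ^ n)).toLinearMap := by
      rw [hg]
      have h3 : ContinuousLinearMap.adjoint (φ ^ n) = (ContinuousLinearMap.adjoint φ) ^ n := by
        rw [← ContinuousLinearMap.star_eq_adjoint, ← ContinuousLinearMap.star_eq_adjoint, star_pow]
      rw [h3]
      exact (map_pow (ContinuousLinearMap.toLinearMapRingHom (R₁ := ℂ) (M₁ := H))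
        (ContinuousLinearMap.adjoint φ) n).symm
    rw [hfp, hgp]
    exact (ContinuousLinearMap.adjoint_inner_right (φ ^ n) x y).symm
  -- `U' ⟂ W`
  have hU'W : ∀ x ∈ U', ∀ w ∈ W, (inner ℂ w x : ℂ) = 0 := by
    intro x hx w hw
    obtain ⟨w₀, _, hw₀⟩ := surj f W hW hWa n w hw
    rw [← hw₀, adjpow, nilU' x hx, inner_zero_right]
  -- `W' ⟂ U`
  have hW'U : ∀ x ∈ W', ∀ u ∈ U, (inner ℂ u x : ℂ) = 0 := by
    intro x hx u hu
    obtain ⟨x₀, _, hx₀⟩ := surj g W' hW' hWa' n x hx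
    rw [← hx₀, ← adjpow, nilU u hu, inner_zero_left]
  -- decompose an arbitrary vector
  have decomp : ∀ (V V'' : Submodule ℂ H), IsCompl V V'' → ∀ x : H,
      ∃ v ∈ V, ∃ u ∈ V'', v + u = x := by
    intro V V'' hc x
    have : x ∈ V ⊔ V'' := by rw [hc.sup_eq_top]; trivial
    obtain ⟨v, hv, u, hu, h⟩ := Submodule.mem_sup.1 this
    exact ⟨v, hv, u, hu, h⟩
  constructor
  · intro x y
    obtain ⟨w', hw', u', hu', hx⟩ := decomp W' U' hWU' x
    obtain ⟨w, hw, u, hu, hy⟩ := decomp W U hWU y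
    have hψ : ψ₁ x = ContinuousLinearMap.adjoint φ w' := by
      rw [← hx, map_add, hψ₁W w' hw', hψ₁U u' hu', add_zero]
    have hφ : φ₁ y = φ w := by
      rw [← hy, map_add, hφ₁W w hw, hφ₁U u hu, add_zero]
    rw [hψ, hφ, ContinuousLinearMap.adjoint_inner_left, ← hx, ← hy]
    rw [map_add, inner_add_left, inner_add_right]
    have h1 : (inner ℂ u' (φ w) : ℂ) = 0 := by
      rw [← inner_conj_symm, hU'W u' hu' (φ w) (hW w hw), map_zero]
    have h2 : (inner ℂ w' (φ u) : ℂ) = 0 := by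
      rw [← inner_conj_symm, hW'U w' hw' (φ u) (hU u hu), map_zero]
    rw [h1, h2]
  · intro x y
    obtain ⟨w', hw', u', hu', hx⟩ := decomp W' U' hWU' x
    obtain ⟨w, hw, u, hu, hy⟩ := decomp W U hWU y
    have hψ : ψ₂ x = ContinuousLinearMap.adjoint φ u' := by
      rw [← hx, map_add, hψ₂W w' hw', hψ₂U u' hu', zero_add]
    have hφ : φ₂ y = φ u := by
      rw [← hy, map_add, hφ₂W w hw, hφ₂U u hu, zero_add]
    rw [hψ, hφ, ContinuousLinearMap.adjoint_inner_left, ← hx, ← hy]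
    rw [map_add, inner_add_left, inner_add_right]
    have h1 : (inner ℂ w' (φ u) : ℂ) = 0 := by
      rw [← inner_conj_symm, hW'U w' hw' (φ u) (hU u hu), map_zero]
    have h2 : (inner ℂ u' (φ w) : ℂ) = 0 := by
      rw [← inner_conj_symm, hU'W u' hu' (φ w) (hW w hw), map_zero]
    rw [h1, h2]
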